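/- Let Z_n be a [0,1]-valued random process such that Z_{n+1} ≤ 2·Z_n with probability 1/2 and Z_{n+1} ≤ 2·Z_n^{3/2} with probability 1/2 (independently at each step), and suppose Z_n → 0 almost surely on an event of probability at least R. Then for any β < (log₂(3/2))/2, we have P(Z_n ≤ 2^{-2^{nβ}} eventually) ≥ R. -/

import Mathlib

open MeasureTheory ProbabilityTheory Filter
open Finset Topology

/-- Error-exponent bound for the quantized polar process: if a `[0,1]`-valued process
`Z_n` satisfies `Z_{n+1} ≤ 2 Z_n` or `Z_{n+1} ≤ 2 Z_n^{3/2}` according to i.i.d. fair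
coin flips, and `Z_n → 0` on an event of probability at least `R`, then for every
`β < log₂(3/2)/2` we have `P(Z_n ≤ 2^{-2^{nβ}} eventually) ≥ R`. -/
lemma det_lemma (b : ℕ → Bool) (z : ℕ → ℝ)
    (hz01 : ∀ n, z n ∈ Set.Icc (0:ℝ) 1)
    (hstep : ∀ n, z (n+1) ≤ if b n then 2 * z n else 2 * (z n) ^ ((3:ℝ)/2))
    (hz0 : Tendsto z atTop (nhds 0))
    (hfreq : Tendsto (fun n => (∑ k ∈ range n, (if b k then (0:ℝ) else 1)) / n)
      atTop (nhds (1/2)))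
    (β : ℝ) (hβ : β < Real.logb 2 (3/2) / 2) :
    ∀ᶠ n : ℕ in atTop, z n ≤ (2:ℝ) ^ (-(2:ℝ) ^ ((n:ℝ) * β)) := by
  by_cases h0 : ∃ m, z m = 0
  · obtain ⟨m, hm⟩ := h0
    have hz : ∀ n, m ≤ n → z n = 0 := by
      intro n hn
      induction n, hn using Nat.le_induction with
      | base => exact hm
      | succ n hn ih =>
        have := hstep n
        rw [ih] at this
        have h2 : (0:ℝ) ^ ((3:ℝ)/2) = 0 := Real.zero_rpow (by norm_num)
        have hle : z (n+1) ≤ 0 := by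
          rcases Bool.eq_false_or_eq_true (b n) with h | h <;> simp [h, h2] at this <;> linarith
        exact le_antisymm hle (hz01 (n+1)).1
    filter_upwards [eventually_ge_atTop m] with n hn
    rw [hz n hn]
    positivity
  · push_neg at h0
    have hzpos : ∀ n, 0 < z n := fun n => lt_of_le_of_ne (hz01 n).1 (Ne.symm (h0 n))
    set x : ℕ → ℝ := fun n => Real.logb 2 (z n) with hxdef
    have hx0 : ∀ n, x n ≤ 0 := fun n =>
      Real.logb_nonpos one_lt_two (hz01 n).1 (hz01 n).2
    have hxbot : Tendsto x atTop atBot := by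
      have h1 : Tendsto z atTop (𝓝[>] (0:ℝ)) := by
        refine tendsto_nhdsWithin_of_tendsto_nhds_of_eventually_within _ hz0 ?_
        exact Eventually.of_forall fun n => hzpos n
      have h2 : Tendsto (fun n => Real.log (z n)) atTop atBot :=
        (Real.tendsto_log_nhdsGT_zero).comp h1
      have : Tendsto (fun n => Real.log (z n) / Real.log 2) atTop atBot :=
        h2.atBot_div_const (Real.log_pos one_lt_two)
      exact this
    set u : ℕ → ℝ := fun n => -x n with hudef
    have hu : Tendsto u atTop atTop := tendsto_neg_atBot_atTop.comp hxbot
    -- choose ε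
    have hgγ : Real.logb 2 (3/2) / 2 = (Real.logb 2 (1-0) + Real.logb 2 (3/2-0))/2 := by
      norm_num
    have hcont : ContinuousAt (fun e : ℝ => (Real.logb 2 (1 - e) + Real.logb 2 (3/2 - e))/2) 0 := by
      apply ContinuousAt.div_const
      apply ContinuousAt.add
      · have : ContinuousAt Real.log ((fun e : ℝ => 1 - e) 0) :=
          Real.continuousAt_log (by norm_num)
        exact (this.comp (by fun_prop)).div_const _
      · have : ContinuousAt Real.log ((fun e : ℝ => 3/2 - e) 0) :=
          Real.continuousAt_log (by norm_num)
        exact (this.comp (by fun_prop)).div_const _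
    have hev : ∀ᶠ e in nhds (0:ℝ), β < (Real.logb 2 (1 - e) + Real.logb 2 (3/2 - e))/2 := by
      have : β < (Real.logb 2 (1-0) + Real.logb 2 (3/2-0))/2 := by rw [← hgγ]; exact hβ
      exact hcont.eventually_const_lt this
    have hev2 : ∀ᶠ e in nhds (0:ℝ), |e| < 1/2 := by
      have : Set.Ioo (-(1/2):ℝ) (1/2) ∈ nhds (0:ℝ) := Ioo_mem_nhds (by norm_num) (by norm_num)
      filter_upwards [this] with e he
      rw [abs_lt]; exact ⟨he.1, he.2⟩
    obtain ⟨ε, hεmem, hεβ, hεhalf⟩ :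
        ∃ ε : ℝ, ε ∈ Set.Ioi (0:ℝ) ∧
          β < (Real.logb 2 (1 - ε) + Real.logb 2 (3/2 - ε))/2 ∧ |ε| < 1/2 := by
      have h3 := (hev.and hev2).filter_mono (nhdsWithin_le_nhds (s := Set.Ioi (0:ℝ)))
      have h4 : ∀ᶠ e in 𝓝[>] (0:ℝ), e ∈ Set.Ioi (0:ℝ) := self_mem_nhdsWithin
      obtain ⟨e, he1, he2, he3⟩ := (h4.and h3).exists
      exact ⟨e, he1, he2, he3⟩
    have hεpos : 0 < ε := hεmem
    have hεlt : ε < 1/2 := lt_of_abs_lt hεhalf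
    set a : ℝ := Real.logb 2 (1 - ε) with hadef
    set c : ℝ := Real.logb 2 (3/2 - ε) with hcdef
    have haneg : a < 0 := Real.logb_neg one_lt_two (by linarith) (by linarith)
    have hcpos : 0 < c := Real.logb_pos one_lt_two (by linarith)
    have hd : 0 < c - a := by linarith
    set ε₂ : ℝ := ((a+c)/2 - β)/(2*(c-a)) with hε₂def
    have hε₂pos : 0 < ε₂ := by
      apply div_pos (by linarith [hεβ]) (by linarith)
    set ρ : ℝ := a + (1/2 - ε₂)*(c-a) with hρdef
    have hρβ : β < ρ := by
      have : ε₂ * (c - a) = ((a+c)/2 - β)/2 := by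
        rw [hε₂def]; field_simp
      rw [hρdef]; nlinarith [hεβ]
    -- stage m₀
    obtain ⟨m₀, hm₀⟩ : ∃ m₀, ∀ n ≥ m₀, 1/ε ≤ u n := by
      have := hu.eventually_ge_atTop (1/ε)
      exact eventually_atTop.mp this
    have hupos : ∀ n, m₀ ≤ n → 0 < u n := fun n hn =>
      lt_of_lt_of_le (by positivity) (hm₀ n hn)
    -- per-step
    set g : ℕ → ℝ := fun k => if b k then a else c with hgdef
    have hstep2 : ∀ n, m₀ ≤ n → Real.logb 2 (u n) + g n ≤ Real.logb 2 (u (n+1)) := by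
      intro n hn
      have hun : 0 < u n := hupos n hn
      have hun1 : 0 < u (n+1) := hupos (n+1) (by omega)
      have h1ε : 1 ≤ ε * u n := by
        rw [← div_le_iff₀' hεpos] at *
        exact hm₀ n hn
      have hxs := hstep n
      have hznpos := hzpos n
      rcases Bool.eq_false_or_eq_true (b n) with hb | hb
      · -- doubling case
        rw [if_pos hb] at hxs
        have hxle : x (n+1) ≤ 1 + x n := by
          have := Real.logb_le_logb_of_le (b := 2) one_lt_two (hzpos (n+1)) hxs
          rw [Real.logb_mul (by norm_num) (ne_of_gt (hzpos n))] at this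
          simpa [Real.logb_self_eq_one, hxdef] using this
        have huge : (1 - ε) * u n ≤ u (n+1) := by
          simp only [hudef] at h1ε ⊢; nlinarith [hxle]
        calc Real.logb 2 (u n) + g n = Real.logb 2 ((1 - ε) * u n) := by
              rw [Real.logb_mul (by linarith) (ne_of_gt hun), hgdef]
              simp [hb, hadef]; ring
          _ ≤ Real.logb 2 (u (n+1)) :=
              Real.logb_le_logb_of_le one_lt_two (mul_pos (by linarith) hun) huge
      · -- squaring case
        rw [if_neg (by simp [hb])] at hxs
        have hxle : x (n+1) ≤ 1 + (3/2) * x n := by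
          have h2z : (0:ℝ) < 2 * (z n) ^ ((3:ℝ)/2) := by positivity
          have := Real.logb_le_logb_of_le (b := 2) one_lt_two (hzpos (n+1)) hxs
          rw [Real.logb_mul (by norm_num) (by positivity)] at this
          rw [show Real.logb 2 ((z n) ^ ((3:ℝ)/2)) = (3/2) * Real.logb 2 (z n) by
            rw [Real.logb, Real.log_rpow (hzpos n), Real.logb]; ring] at this
          simpa [Real.logb_self_eq_one, hxdef] using this
        have huge : (3/2 - ε) * u n ≤ u (n+1) := by
          simp only [hudef] at h1ε ⊢; nlinarith [hxle, hx0 n]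
        calc Real.logb 2 (u n) + g n = Real.logb 2 ((3/2 - ε) * u n) := by
              rw [Real.logb_mul (by linarith) (ne_of_gt hun), hgdef]
              simp [hb, hcdef]; ring
          _ ≤ Real.logb 2 (u (n+1)) :=
              Real.logb_le_logb_of_le one_lt_two (mul_pos (by linarith) hun) huge
    -- induction
    have hclaim : ∀ n, m₀ ≤ n →
        Real.logb 2 (u m₀) + ∑ k ∈ Ico m₀ n, g k ≤ Real.logb 2 (u n) := by
      intro n hn
      induction n, hn using Nat.le_induction with
      | base => simp
      | succ n hn ih =>
        rw [Finset.sum_Ico_succ_top hn]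
        have := hstep2 n hn
        linarith
    -- sum identity
    set f : ℕ → ℝ := fun k => if b k then 0 else 1 with hfdef
    set S : ℕ → ℝ := fun n => ∑ k ∈ range n, f k with hSdef
    have hsum : ∀ n, m₀ ≤ n →
        ∑ k ∈ Ico m₀ n, g k = ((n:ℝ) - m₀) * a + (c - a) * (S n - S m₀) := by
      intro n hn
      have h1 : ∀ k ∈ Ico m₀ n, g k = a + (c - a) * f k := by
        intro k _
        rcases Bool.eq_false_or_eq_true (b k) with hb | hb <;> simp [hgdef, hfdef, hb] <;> ring
      rw [Finset.sum_congr rfl h1, Finset.sum_add_distrib, Finset.sum_const,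
        nsmul_eq_mul, ← Finset.mul_sum, Nat.card_Ico,
        Finset.sum_Ico_eq_sub _ hn, Nat.cast_sub hn]
    -- eventual bounds
    have hSfreq : ∀ᶠ n : ℕ in atTop, (1/2 - ε₂) * n ≤ S n := by
      have h1 : ∀ᶠ n : ℕ in atTop, 1/2 - ε₂ < S n / n :=
        hfreq.eventually_const_lt (by linarith)
      filter_upwards [h1, eventually_ge_atTop 1] with n hn hn1
      have hnpos : (0:ℝ) < n := by exact_mod_cast hn1
      rw [lt_div_iff₀ hnpos] at hn
      linarith
    set K : ℝ := Real.logb 2 (u m₀) - (m₀:ℝ) * a - (c - a) * S m₀ with hKdef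
    have hlin : ∀ᶠ n : ℕ in atTop, (n:ℝ) * β ≤ (n:ℝ) * ρ + K := by
      have ht : Tendsto (fun n : ℕ => (n:ℝ) * (ρ - β)) atTop atTop :=
        (tendsto_natCast_atTop_atTop : Tendsto (fun n : ℕ => (n:ℝ)) atTop atTop).atTop_mul_const
          (by linarith : (0:ℝ) < ρ - β)
      filter_upwards [ht.eventually_ge_atTop (-K)] with n hn
      have h2 : (n:ℝ) * (ρ - β) = (n:ℝ) * ρ - (n:ℝ) * β := by ring
      linarith
    filter_upwards [hSfreq, hlin, eventually_ge_atTop m₀] with n hS hl hn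
    have h1 := hclaim n hn
    rw [hsum n hn] at h1
    have hnm : (m₀:ℝ) ≤ (n:ℝ) := by exact_mod_cast hn
    have h2 : (n:ℝ) * ρ + K ≤ Real.logb 2 (u n) := by
      have h3 : (c - a) * ((1/2 - ε₂) * n - S m₀) ≤ (c - a) * (S n - S m₀) := by
        apply mul_le_mul_of_nonneg_left (by linarith) (le_of_lt hd)
      calc (n:ℝ) * ρ + K
          = Real.logb 2 (u m₀) + (((n:ℝ) - m₀) * a + (c - a) * ((1/2 - ε₂) * n - S m₀)) := by
            rw [hρdef, hKdef]; ring
        _ ≤ Real.logb 2 (u m₀) + (((n:ℝ) - m₀) * a + (c - a) * (S n - S m₀)) :=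
            add_le_add_right (add_le_add_right h3 _) _
        _ ≤ Real.logb 2 (u n) := h1
    have hβn : (n:ℝ) * β ≤ Real.logb 2 (u n) := le_trans hl h2
    have hun : 0 < u n := hupos n hn
    have hub : (2:ℝ) ^ ((n:ℝ) * β) ≤ u n := by
      calc (2:ℝ) ^ ((n:ℝ) * β) ≤ (2:ℝ) ^ (Real.logb 2 (u n)) :=
            Real.rpow_le_rpow_of_exponent_le one_le_two hβn
        _ = u n := Real.rpow_logb two_pos (by norm_num) hun
    have hzn : z n = (2:ℝ) ^ (x n) := (Real.rpow_logb two_pos (by norm_num) (hzpos n)).symm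
    rw [hzn]
    apply Real.rpow_le_rpow_of_exponent_le one_le_two
    have : x n = -u n := by simp [hudef]
    rw [this]
    exact neg_le_neg hub

theorem stmt_13 {Ω : Type*} [MeasurableSpace Ω] (μ : Measure Ω) [IsProbabilityMeasure μ]
    (B : ℕ → Ω → Bool) (Z : ℕ → Ω → ℝ) (R : ℝ) (A : Set Ω)
    (hBmeas : ∀ n, Measurable (B n))
    (hBindep : iIndepFun B μ)
    (hBfair : ∀ n, μ {ω | B n ω = true} = 1/2)
    (hZmeas : ∀ n, Measurable (Z n))
    (hZ01 : ∀ n ω, Z n ω ∈ Set.Icc (0:ℝ) 1)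
    (hstep : ∀ n ω, Z (n+1) ω ≤
      if B n ω then 2 * Z n ω else 2 * (Z n ω) ^ ((3:ℝ)/2))
    (hA : ENNReal.ofReal R ≤ μ A)
    (hconv : ∀ ω ∈ A, Tendsto (fun n => Z n ω) atTop (nhds 0)) :
    ∀ β : ℝ, β < Real.logb 2 (3/2) / 2 →
      ENNReal.ofReal R ≤
        μ {ω | ∀ᶠ n : ℕ in atTop, Z n ω ≤ (2:ℝ) ^ (-(2:ℝ) ^ ((n:ℝ) * β))} := by
  intro β hβ
  -- the i.i.d. sequence of indicators of "squaring" steps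
  set φ : Bool → ℝ := fun t => if t then 0 else 1 with hφdef
  have hφmeas : Measurable φ := measurable_of_countable _
  set X : ℕ → Ω → ℝ := fun i ω => φ (B i ω) with hXdef
  have hfalse : ∀ i, μ {ω | B i ω = false} = 1/2 := by
    intro i
    have hc : {ω | B i ω = false} = {ω | B i ω = true}ᶜ := by
      ext ω; simp
    have hmt : MeasurableSet {ω | B i ω = true} := (hBmeas i) (measurableSet_singleton true)
    rw [hc, measure_compl hmt (measure_ne_top μ _), hBfair i, measure_univ,
      one_div, ENNReal.one_sub_inv_two]
  have hXint : Integrable (X 0) μ := by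
    have : ∀ ω, |X 0 ω| ≤ 1 := by
      intro ω; rcases Bool.eq_false_or_eq_true (B 0 ω) with h | h <;>
        simp [hXdef, hφdef, h]
    exact (integrable_const (1:ℝ)).mono
      ((hφmeas.comp (hBmeas 0)).aestronglyMeasurable)
      (Eventually.of_forall (by simpa using this))
  have hXindep : Pairwise (Function.onFun (IndepFun · · μ) X) := by
    intro i j hij
    exact (hBindep.indepFun hij).comp hφmeas hφmeas
  have hident : ∀ i, IdentDistrib (X i) (X 0) μ μ := by
    intro i
    have hB : IdentDistrib (B i) (B 0) μ μ := by
      refine ⟨(hBmeas i).aemeasurable, (hBmeas 0).aemeasurable, ?_⟩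
      apply MeasureTheory.Measure.ext_of_singleton
      intro t
      rw [Measure.map_apply (hBmeas i) (measurableSet_singleton t),
        Measure.map_apply (hBmeas 0) (measurableSet_singleton t)]
      rcases Bool.eq_false_or_eq_true t with h | h <;> subst h
      · show μ {ω | B i ω = true} = μ {ω | B 0 ω = true}
        rw [hBfair i, hBfair 0]
      · show μ {ω | B i ω = false} = μ {ω | B 0 ω = false}
        rw [hfalse i, hfalse 0]
    exact hB.comp hφmeas
  have hmean : μ[X 0] = 1/2 := by
    have hXeq : X 0 = Set.indicator {ω | B 0 ω = false} (fun _ => (1:ℝ)) := by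
      funext ω
      rcases Bool.eq_false_or_eq_true (B 0 ω) with h | h <;>
        simp [hXdef, hφdef, h, Set.indicator]
    have hmf : MeasurableSet {ω | B 0 ω = false} :=
      (hBmeas 0) (measurableSet_singleton false)
    rw [hXeq, MeasureTheory.integral_indicator_const _ hmf, measureReal_def, hfalse 0]
    simp [ENNReal.toReal_div]
  have hslln := ProbabilityTheory.strong_law_ae_real X hXint hXindep hident
  rw [hmean] at hslln
  set T : Set Ω := {ω | ∀ᶠ n : ℕ in atTop, Z n ω ≤ (2:ℝ) ^ (-(2:ℝ) ^ ((n:ℝ) * β))} with hTdef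
  have hsub : ∀ ω ∈ A, (Tendsto (fun n : ℕ => (∑ i ∈ Finset.range n, X i ω) / n)
      atTop (nhds (1/2))) → ω ∈ T := by
    intro ω hωA hωG
    have := det_lemma (fun n => B n ω) (fun n => Z n ω) (fun n => hZ01 n ω)
      (fun n => hstep n ω) (hconv ω hωA) ?_ β hβ
    · exact this
    · exact hωG
  calc ENNReal.ofReal R ≤ μ A := hA
    _ ≤ μ T := by
      apply measure_mono_ae
      filter_upwards [hslln] with ω hω hωA
      exact hsub ω hωA hω
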